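/- Let V₀ > 0 and λ > √2, and set V(x) = V₀e^{−λx}. Define on (0, ∞): θ(t) = 2(λ²+1)/(λ²t), σ(t) = (2−λ²)/(√3 λ² t), φ(t) = (2/λ)ln t + (1/λ)ln(V₀λ⁴/(2(λ²+2))), ψ(t) = 2/(λt), and b(t) = λ²t/√(λ⁴−4). Then these functions satisfy the Einstein–Klein–Gordon evolution system with potential V, one has V(φ(t)) = 2(λ²+2)/(λ⁴t²), the scale-factor relation b'/b = (θ − √3σ)/3 holds, and the Bianchi III (k = −1) constraint (1/3)θ² − 1/b² = σ² + V(φ) + ψ²/2 holds identically. (This is the exact Bianchi III solution corresponding to the critical point P₃.) -/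

import Mathlib

/-- For the exponential potential `V(x) = V₀·exp(−λx)` with
`V₀ > 0` and `λ > √2`, the functions `θ(t) = 2(λ²+1)/(λ²t)`,
`σ(t) = (2−λ²)/(√3λ²t)`, `φ(t) = (2/λ)ln t + (1/λ)ln(V₀λ⁴/(2(λ²+2)))`,
`ψ(t) = 2/(λt)` and `b(t) = λ²t/√(λ⁴−4)` on `(0, ∞)` satisfy the
Einstein–Klein–Gordon evolution system (units `8πG = 1`), one has
`V(φ(t)) = 2(λ²+2)/(λ⁴t²)`, the scale-factor relation `b'/b = (θ − √3σ)/3`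
holds, and the Bianchi III (`k = −1`) constraint
`(1/3)θ² − 1/b² = σ² + V(φ) + ψ²/2` holds identically. This is the exact
Bianchi III solution corresponding to the critical point `P₃`. -/
theorem exact_solution_P3
    (V₀ lam : ℝ) (hV₀ : 0 < V₀) (hlam : Real.sqrt 2 < lam)
    (V : ℝ → ℝ) (hV : ∀ x, V x = V₀ * Real.exp (-lam * x))
    (θ σ φ ψ b : ℝ → ℝ)
    (hθ : ∀ t, θ t = 2 * (lam ^ 2 + 1) / (lam ^ 2 * t))
    (hσ : ∀ t, σ t = (2 - lam ^ 2) / (Real.sqrt 3 * lam ^ 2 * t))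
    (hφ : ∀ t, φ t = (2 / lam) * Real.log t
        + (1 / lam) * Real.log (V₀ * lam ^ 4 / (2 * (lam ^ 2 + 2))))
    (hψ : ∀ t, ψ t = 2 / (lam * t))
    (hb : ∀ t, b t = lam ^ 2 * t / Real.sqrt (lam ^ 4 - 4)) :
    ∀ t ∈ Set.Ioi (0 : ℝ),
      HasDerivAt θ
        (-(1 / 3) * θ t ^ 2 - 2 * σ t ^ 2 + V (φ t) - ψ t ^ 2) t ∧
      HasDerivAt σ
        (-θ t ^ 2 / (3 * Real.sqrt 3) - θ t * σ t + σ t ^ 2 / Real.sqrt 3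
          + (1 / Real.sqrt 3) * (V (φ t) + ψ t ^ 2 / 2)) t ∧
      HasDerivAt φ (ψ t) t ∧
      HasDerivAt ψ (-θ t * ψ t - deriv V (φ t)) t ∧
      V (φ t) = 2 * (lam ^ 2 + 2) / (lam ^ 4 * t ^ 2) ∧
      HasDerivAt b ((θ t - Real.sqrt 3 * σ t) / 3 * b t) t ∧
      (1 / 3) * θ t ^ 2 - 1 / b t ^ 2
        = σ t ^ 2 + V (φ t) + ψ t ^ 2 / 2 := by
  intro t ht
  rw [Set.mem_Ioi] at ht
  have h20 : (0:ℝ) < Real.sqrt 2 := Real.sqrt_pos.2 (by norm_num)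
  have hl0 : 0 < lam := h20.trans hlam
  have hl2 : 2 < lam ^ 2 := by
    have h2 : Real.sqrt 2 ^ 2 = 2 := Real.sq_sqrt (by norm_num)
    nlinarith [Real.sqrt_nonneg 2]
  have hl4 : 4 < lam ^ 4 := by nlinarith
  have hs3 : Real.sqrt 3 ^ 2 = 3 := Real.sq_sqrt (by norm_num)
  have hs33 : Real.sqrt 3 ^ 3 = 3 * Real.sqrt 3 := by
    rw [pow_succ, hs3]
  have hs34 : Real.sqrt 3 ^ 4 = 9 := by
    rw [show (4:ℕ) = 2*2 from rfl, pow_mul, hs3]; norm_num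
  have hs35 : Real.sqrt 3 ^ 5 = 9 * Real.sqrt 3 := by
    rw [pow_succ, hs34]
  have hs36 : Real.sqrt 3 ^ 6 = 27 := by
    rw [show (6:ℕ) = 2*3 from rfl, pow_mul, hs3]; norm_num
  have hs3p : 0 < Real.sqrt 3 := Real.sqrt_pos.2 (by norm_num)
  have hs4 : Real.sqrt (lam ^ 4 - 4) ^ 2 = lam ^ 4 - 4 := Real.sq_sqrt (by linarith)
  have hs4p : 0 < Real.sqrt (lam ^ 4 - 4) := Real.sqrt_pos.2 (by linarith)
  have htne : t ≠ 0 := ht.ne'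
  have hlne : lam ≠ 0 := hl0.ne'
  have hCpos : (0:ℝ) < V₀ * lam ^ 4 / (2 * (lam ^ 2 + 2)) := by positivity
  -- value of V along φ
  have hVφ : V (φ t) = 2 * (lam ^ 2 + 2) / (lam ^ 4 * t ^ 2) := by
    rw [hV, hφ]
    have key : -lam * ((2 / lam) * Real.log t
        + (1 / lam) * Real.log (V₀ * lam ^ 4 / (2 * (lam ^ 2 + 2))))
        = Real.log ((t ^ 2 * (V₀ * lam ^ 4 / (2 * (lam ^ 2 + 2))))⁻¹) := by
      rw [Real.log_inv, Real.log_mul (pow_ne_zero 2 htne) hCpos.ne', Real.log_pow]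
      field_simp
      ring
    rw [key, Real.exp_log (by positivity)]
    field_simp
  have hVd : ∀ x, HasDerivAt V (-lam * (V₀ * Real.exp (-lam * x))) x := by
    intro x
    rw [funext hV]
    have h := (((hasDerivAt_id x).const_mul (-lam)).exp).const_mul V₀
    refine h.congr_deriv ?_
    simp only [id_eq, mul_one]
    ring
  have hdV : deriv V (φ t) = -(2 * (lam ^ 2 + 2)) / (lam ^ 3 * t ^ 2) := by
    have h1 := (hVd (φ t)).deriv
    rw [← hV (φ t), hVφ] at h1
    rw [h1]
    field_simp
  -- squared scale factor
  have hb2 : b t ^ 2 = lam ^ 4 * t ^ 2 / (lam ^ 4 - 4) := by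
    rw [hb, div_pow, hs4]
    ring_nf
  -- derivative templates
  have hθ' : HasDerivAt θ (-(2 * (lam ^ 2 + 1)) / (lam ^ 2 * t ^ 2)) t := by
    rw [funext hθ]
    have h := (hasDerivAt_const t (2 * (lam ^ 2 + 1))).div
      ((hasDerivAt_id t).const_mul (lam ^ 2)) (by positivity)
    refine h.congr_deriv ?_
    simp only [id_eq]
    field_simp
    ring
  have hσ' : HasDerivAt σ (-(2 - lam ^ 2) / (Real.sqrt 3 * lam ^ 2 * t ^ 2)) t := by
    rw [funext hσ]
    have h := (hasDerivAt_const t (2 - lam ^ 2)).div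
      ((hasDerivAt_id t).const_mul (Real.sqrt 3 * lam ^ 2)) (by positivity)
    refine h.congr_deriv ?_
    simp only [id_eq]
    field_simp
    ring
  have hφ' : HasDerivAt φ (2 / (lam * t)) t := by
    rw [funext hφ]
    have h := (((Real.hasDerivAt_log htne).const_mul (2 / lam)).add_const
      ((1 / lam) * Real.log (V₀ * lam ^ 4 / (2 * (lam ^ 2 + 2)))))
    refine h.congr_deriv ?_
    field_simp
  have hψ' : HasDerivAt ψ (-2 / (lam * t ^ 2)) t := by
    rw [funext hψ]
    have h := (hasDerivAt_const t (2:ℝ)).div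
      ((hasDerivAt_id t).const_mul lam) (by positivity)
    refine h.congr_deriv ?_
    simp only [id_eq]
    field_simp
    ring
  have hb' : HasDerivAt b (lam ^ 2 / Real.sqrt (lam ^ 4 - 4)) t := by
    rw [funext hb]
    have h := (((hasDerivAt_id t).const_mul (lam ^ 2)).div_const (Real.sqrt (lam ^ 4 - 4)))
    refine h.congr_deriv ?_
    simp only [id_eq, mul_one]
  refine ⟨?_, ?_, ?_, ?_, hVφ, ?_, ?_⟩
  · convert hθ' using 1
    rw [hθ t, hσ t, hψ t, hVφ]
    field_simp
    ring_nf
    try simp only [hs3, hs33, hs34, hs35, hs36]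
    try ring
  · convert hσ' using 1
    rw [hθ t, hσ t, hψ t, hVφ]
    field_simp
    ring_nf
    try simp only [hs3, hs33, hs34, hs35, hs36]
    try ring
  · convert hφ' using 1
    rw [hψ t]
  · convert hψ' using 1
    rw [hθ t, hψ t, hdV]
    field_simp
    ring
  · convert hb' using 1
    rw [hθ t, hσ t, hb t]
    field_simp
    ring_nf
    try simp only [hs3, hs33, hs34, hs35, hs36]
    try ring
  · rw [hθ t, hσ t, hψ t, hVφ, hb2]
    have hd4 : lam ^ 4 - 4 ≠ 0 := by linarith
    field_simp
    ring_nf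
    try simp only [hs3, hs33, hs34, hs35, hs36]
    try ring
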